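/- Fix reals α, β, λ > 0 and set κ = λ+α+β. Define the staleness function Δ̃(μ) = (β(λ+2α)μ + λβκ)/(κμ² + (κ²+βλ)μ + λ(α+β)κ) for μ ≥ 0. If (κ−α)² + α(λ−α) ≥ 0, then the derivative of Δ̃ satisfies Δ̃'(μ) ≤ 0 for all μ ≥ 0; in particular Δ̃ is monotone nonincreasing on [0,∞). -/

import Mathlib

/-- If (κ−α)² + α(λ−α) ≥ 0 then the staleness Δ̃ has nonpositive derivative
for all μ ≥ 0, and in particular is monotone nonincreasing on [0,∞). -/
theorem staleness_antitone
    (α β lam : ℝ) (hα : 0 < α) (hβ : 0 < β) (hlam : 0 < lam)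
    (κ : ℝ) (hκ : κ = lam + α + β)
    (hcond : 0 ≤ (κ - α) ^ 2 + α * (lam - α)) :
    (∀ μ : ℝ, 0 ≤ μ →
      deriv (fun x : ℝ =>
        (β * (lam + 2 * α) * x + lam * β * κ) /
        (κ * x ^ 2 + (κ ^ 2 + β * lam) * x + lam * (α + β) * κ)) μ ≤ 0) ∧
    AntitoneOn (fun x : ℝ =>
        (β * (lam + 2 * α) * x + lam * β * κ) /
        (κ * x ^ 2 + (κ ^ 2 + β * lam) * x + lam * (α + β) * κ))
      (Set.Ici 0) := by
  have hκpos : 0 < κ := by rw [hκ]; positivity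
  set f : ℝ → ℝ := fun x : ℝ =>
    (β * (lam + 2 * α) * x + lam * β * κ) /
    (κ * x ^ 2 + (κ ^ 2 + β * lam) * x + lam * (α + β) * κ) with hf
  have hD : ∀ μ : ℝ, 0 ≤ μ →
      0 < κ * μ ^ 2 + (κ ^ 2 + β * lam) * μ + lam * (α + β) * κ := by
    intro μ hμ
    have h1 : 0 ≤ κ * μ ^ 2 := by positivity
    have h2 : 0 ≤ (κ ^ 2 + β * lam) * μ := by positivity
    have h3 : 0 < lam * (α + β) * κ := by positivity
    linarith
  have hder : ∀ μ : ℝ, 0 ≤ μ → HasDerivAt f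
      ((β * (lam + 2 * α) *
          (κ * μ ^ 2 + (κ ^ 2 + β * lam) * μ + lam * (α + β) * κ) -
        (β * (lam + 2 * α) * μ + lam * β * κ) * (2 * κ * μ + (κ ^ 2 + β * lam))) /
        (κ * μ ^ 2 + (κ ^ 2 + β * lam) * μ + lam * (α + β) * κ) ^ 2) μ := by
    intro μ hμ
    have h1 : HasDerivAt (fun x : ℝ => β * (lam + 2 * α) * x + lam * β * κ)
        (β * (lam + 2 * α)) μ := by
      simpa using ((hasDerivAt_id μ).const_mul (β * (lam + 2 * α))).add_const (lam * β * κ)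
    have h2 : HasDerivAt (fun x : ℝ => κ * x ^ 2 + (κ ^ 2 + β * lam) * x + lam * (α + β) * κ)
        (2 * κ * μ + (κ ^ 2 + β * lam)) μ := by
      have : HasDerivAt (fun x : ℝ => κ * x ^ 2 + (κ ^ 2 + β * lam) * x + lam * (α + β) * κ) _ μ :=
        (((hasDerivAt_pow 2 μ).const_mul κ).add
        ((hasDerivAt_id μ).const_mul (κ ^ 2 + β * lam))).add_const (lam * (α + β) * κ)
      convert this using 1
      ring
    exact h1.div h2 (hD μ hμ).ne'
  have hnum : ∀ μ : ℝ, 0 ≤ μ →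
      β * (lam + 2 * α) *
          (κ * μ ^ 2 + (κ ^ 2 + β * lam) * μ + lam * (α + β) * κ) -
        (β * (lam + 2 * α) * μ + lam * β * κ) * (2 * κ * μ + (κ ^ 2 + β * lam)) ≤ 0 := by
    intro μ hμ
    have key : β * (lam + 2 * α) *
          (κ * μ ^ 2 + (κ ^ 2 + β * lam) * μ + lam * (α + β) * κ) -
        (β * (lam + 2 * α) * μ + lam * β * κ) * (2 * κ * μ + (κ ^ 2 + β * lam)) =
        -(β * (lam + 2 * α) * κ * μ ^ 2 + 2 * lam * β * κ ^ 2 * μ +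
          lam * β * κ * ((κ - α) ^ 2 + α * (lam - α))) := by
      subst hκ; ring
    rw [key]
    have h1 : 0 ≤ β * (lam + 2 * α) * κ * μ ^ 2 := by positivity
    have h2 : 0 ≤ 2 * lam * β * κ ^ 2 * μ := by positivity
    have h3 : 0 ≤ lam * β * κ * ((κ - α) ^ 2 + α * (lam - α)) := by
      have : (0:ℝ) < lam * β * κ := by positivity
      exact mul_nonneg this.le hcond
    linarith
  have hderiv_nonpos : ∀ μ : ℝ, 0 ≤ μ → deriv f μ ≤ 0 := by
    intro μ hμ
    rw [(hder μ hμ).deriv]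
    exact div_nonpos_of_nonpos_of_nonneg (hnum μ hμ) (by positivity)
  refine ⟨hderiv_nonpos, ?_⟩
  have hdiff : ∀ μ ∈ Set.Ici (0:ℝ), DifferentiableAt ℝ f μ :=
    fun μ hμ => (hder μ hμ).differentiableAt
  apply antitoneOn_of_deriv_nonpos (convex_Ici 0)
  · exact continuousOn_of_forall_continuousAt fun μ hμ => (hdiff μ hμ).continuousAt
  · intro μ hμ
    rw [interior_Ici] at hμ
    exact (hdiff μ (le_of_lt hμ : (0:ℝ) ≤ μ)).differentiableWithinAt
  · intro μ hμ
    rw [interior_Ici] at hμ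
    exact hderiv_nonpos μ (le_of_lt hμ)
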